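/- arXiv:1905.07674 — 4 statements merged into one kernel-verified Lean document; each statement's English description precedes it below -/
import Mathlib

section
/- Let Ω be a (possibly noncommutative) ring, R a commutative subring contained in the center of Ω, and d : R → Ω an additive map with d(a·b) = d(a)·b + a·d(b). Let I be a type and g : I → I → Matrix(n, n, R) satisfy the cocycle conditions g(a,b)·g(b,c) = g(a,c) and g(a,a) = 1 for all a, b, c. Define, for p ≥ 1 and indices i₀, …, i_p in I, c(i₀,…,i_p) := trace( g(i₀,i_p) · D(g(i_p,i_{p-1})) · D(g(i_{p-1},i_{p-2})) · ⋯ · D(g(i₁,i₀)) ) ∈ Ω, where D applies d entrywise and matrices over R are viewed as matrices over Ω. Then for all p ≥ 1 and all indices i₀, …, i_{p+1}: Σ_{j=0}^{p+1} (−1)^j · c(i₀, …, î_j, …, i_{p+1}) = 0 (the hat denotes omission of the index i_j). -/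
/-- The O'Brian–Toledo–Tong Chern character cochain:
`c(i₀,…,i_p) = tr( g(i₀,i_p) · D(g(i_p,i_{p−1})) ⋯ D(g(i₁,i₀)) )`,
where `D` applies `d : S → Ω` entrywise and matrices over the central subring `S`
are viewed over `Ω` via coercion.  The indices `i₀,…,i_p` are encoded as the first
`p+1` values of `i : ℕ → I`. -/
noncomputable def chernCochain {Ω : Type*} [Ring Ω] (S : Subring Ω) (d : S → Ω)
    {n : ℕ} {I : Type*} (g : I → I → Matrix (Fin n) (Fin n) S)
    (i : ℕ → I) (p : ℕ) : Ω :=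
  Matrix.trace
    (((g (i 0) (i p)).map (fun x => (x : Ω))) *
      ((List.range p).reverse.map (fun t => (g (i (t + 1)) (i t)).map d)).prod)

set_option linter.unusedSectionVars false
set_option linter.unusedVariables false
section
variable {Ω : Type*} [Ring Ω] {S : Subring Ω} {n : ℕ} {I : Type*}

noncomputable def rprod (f : ℕ → Matrix (Fin n) (Fin n) Ω) (p : ℕ) :
    Matrix (Fin n) (Fin n) Ω :=
  ((List.range p).reverse.map f).prod

lemma rprod_zero (f : ℕ → Matrix (Fin n) (Fin n) Ω) : rprod f 0 = 1 := rfl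

lemma rprod_succ (f : ℕ → Matrix (Fin n) (Fin n) Ω) (p : ℕ) :
    rprod f (p + 1) = f p * rprod f p := by
  simp [rprod, List.range_succ]

lemma rprod_congr {f h : ℕ → Matrix (Fin n) (Fin n) Ω} {p : ℕ}
    (H : ∀ t, t < p → f t = h t) : rprod f p = rprod h p := by
  induction p with
  | zero => rfl
  | succ p ih =>
    rw [rprod_succ, rprod_succ, H p (by omega), ih (fun t ht => H t (by omega))]

lemma rprod_add (f : ℕ → Matrix (Fin n) (Fin n) Ω) (a c : ℕ) :
    rprod f (a + c) = rprod (fun t => f (a + t)) c * rprod f a := by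
  induction c with
  | zero => simp [rprod_zero]
  | succ c ih =>
    rw [show a + (c + 1) = (a + c) + 1 by omega, rprod_succ, ih, rprod_succ, mul_assoc]

lemma rprod_one (f : ℕ → Matrix (Fin n) (Fin n) Ω) : rprod f 1 = f 0 := by
  rw [rprod_succ, rprod_zero, mul_one]

lemma rprod_succ' (f : ℕ → Matrix (Fin n) (Fin n) Ω) (p : ℕ) :
    rprod f (p + 1) = rprod (fun t => f (1 + t)) p * f 0 := by
  rw [show p + 1 = 1 + p by omega, rprod_add, rprod_one]

lemma trace_mul_comm_central (A B : Matrix (Fin n) (Fin n) Ω)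
    (hB : ∀ j k x, B j k * x = x * B j k) :
    Matrix.trace (A * B) = Matrix.trace (B * A) := by
  simp only [Matrix.trace, Matrix.diag, Matrix.mul_apply]
  rw [Finset.sum_comm]
  exact Finset.sum_congr rfl fun j _ => Finset.sum_congr rfl fun k _ => (hB _ _ _).symm

noncomputable def GMat (g : I → I → Matrix (Fin n) (Fin n) S) (a b : I) :
    Matrix (Fin n) (Fin n) Ω :=
  (g a b).map (fun x => (x : Ω))

noncomputable def EMat (d : S → Ω) (g : I → I → Matrix (Fin n) (Fin n) S)
    (i : ℕ → I) (t : ℕ) : Matrix (Fin n) (Fin n) Ω :=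
  (g (i (t + 1)) (i t)).map d

noncomputable def ZTerm (d : S → Ω) (g : I → I → Matrix (Fin n) (Fin n) S)
    (i : ℕ → I) (p j : ℕ) : Ω :=
  Matrix.trace (GMat g (i 0) (i (p + 1)) *
    rprod (fun t => if t = j then GMat g (i (t + 1)) (i t) else EMat d g i t) (p + 1))

noncomputable def chernCochain' (d : S → Ω)
    (g : I → I → Matrix (Fin n) (Fin n) S)
    (i : ℕ → I) (p : ℕ) : Ω :=
  Matrix.trace
    (((g (i 0) (i p)).map (fun x => (x : Ω))) *
      ((List.range p).reverse.map (fun t => (g (i (t + 1)) (i t)).map d)).prod)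

lemma chernCochain'_eq (d : S → Ω) (g : I → I → Matrix (Fin n) (Fin n) S)
    (k : ℕ → I) (p : ℕ) :
    chernCochain' d g k p = Matrix.trace (GMat g (k 0) (k p) *
        rprod (fun t => (g (k (t + 1)) (k t)).map d) p) := rfl

lemma GMat_mul (g : I → I → Matrix (Fin n) (Fin n) S)
    (hcoc : ∀ a b c : I, g a b * g b c = g a c) (a b c : I) :
    (GMat g a b : Matrix (Fin n) (Fin n) Ω) * GMat g b c = GMat g a c := by
  have hf : (fun x : S => (x : Ω)) = ⇑S.subtype := rfl
  simp only [GMat, hf, ← Matrix.map_mul, hcoc]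

lemma GMat_central (hcen : ∀ (s : S) (x : Ω), (s : Ω) * x = x * (s : Ω))
    (g : I → I → Matrix (Fin n) (Fin n) S) (a b : I) (j k : Fin n) (x : Ω) :
    (GMat g a b : Matrix (Fin n) (Fin n) Ω) j k * x = x * GMat g a b j k := by
  simp only [GMat, Matrix.map_apply]
  exact hcen _ _

lemma map_d_mul (d : S → Ω) (hd_add : ∀ a b : S, d (a + b) = d a + d b)
    (hd_mul : ∀ a b : S, d (a * b) = d a * (b : Ω) + (a : Ω) * d b)
    (A B : Matrix (Fin n) (Fin n) S) :
    (A * B).map d = A.map d * B.map (fun x => (x : Ω)) +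
      A.map (fun x => (x : Ω)) * B.map d := by
  have hsum : ∀ (F : Fin n → S), d (∑ l, F l) = ∑ l, d (F l) := by
    intro F
    exact map_sum (AddMonoidHom.mk' d hd_add) F Finset.univ
  ext j k
  simp only [Matrix.map_apply, Matrix.mul_apply, Matrix.add_apply, hsum]
  rw [← Finset.sum_add_distrib]
  exact Finset.sum_congr rfl fun l _ => hd_mul _ _

section cases
variable (hcen : ∀ (s : S) (x : Ω), (s : Ω) * x = x * (s : Ω))
  (d : S → Ω)
  (hd_add : ∀ a b : S, d (a + b) = d a + d b)
  (hd_mul : ∀ a b : S, d (a * b) = d a * (b : Ω) + (a : Ω) * d b)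
  (g : I → I → Matrix (Fin n) (Fin n) S)
  (hcoc : ∀ a b c : I, g a b * g b c = g a c)
  (p : ℕ) (i : ℕ → I)

include hcoc in
lemma case_last : chernCochain' d g i p = ZTerm d g i p p := by
  have e1 : rprod (fun t => if t = p then GMat g (i (t + 1)) (i t) else EMat d g i t) (p + 1)
      = GMat g (i (p + 1)) (i p) * rprod (fun t => (g (i (t + 1)) (i t)).map d) p := by
    rw [rprod_succ]
    congr 1
    · rw [if_pos rfl]
    · exact rprod_congr fun t ht => by
        simp only [if_neg (show ¬ t = p by omega), EMat]
  rw [chernCochain'_eq, ZTerm, e1, ← mul_assoc, GMat_mul g hcoc]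

include hcen hcoc in
lemma case_first : chernCochain' d g (fun t => i (t + 1)) p = ZTerm d g i p 0 := by
  have e1 : rprod (fun t => if t = 0 then GMat g (i (t + 1)) (i t) else EMat d g i t) (p + 1)
      = rprod (fun t => (g (i (t + 1 + 1)) (i (t + 1))).map d) p * GMat g (i 1) (i 0) := by
    rw [rprod_succ']
    congr 1
    · exact rprod_congr fun t ht => by
        simp only [if_neg (show ¬ 1 + t = 0 by omega), EMat]
        rw [Nat.add_comm 1 t]
  rw [chernCochain'_eq, ZTerm, e1, ← mul_assoc,
    trace_mul_comm_central _ (GMat g (i 1) (i 0)) (fun j k x => GMat_central hcen g _ _ j k x),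
    ← mul_assoc, GMat_mul g hcoc]

include hcoc hd_add hd_mul in
lemma case_mid (m q : ℕ) (k : ℕ → I)
    (hk1 : ∀ t, t < m + 1 → k t = i t) (hk2 : ∀ t, m + 1 ≤ t → k t = i (t + 1)) :
    chernCochain' d g k (m + 1 + q)
      = ZTerm d g i (m + 1 + q) m + ZTerm d g i (m + 1 + q) (m + 1) := by
  have hL : (g (i (m + 2)) (i m)).map d
      = EMat d g i (m + 1) * GMat g (i (m + 1)) (i m)
        + GMat g (i (m + 2)) (i (m + 1)) * EMat d g i m := by
    rw [← hcoc (i (m + 2)) (i (m + 1)) (i m), map_d_mul d hd_add hd_mul]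
    rfl
  have eF : rprod (fun t => (g (k (t + 1)) (k t)).map d) (m + 1 + q)
      = rprod (fun t => EMat d g i (m + 2 + t)) q *
          ((g (i (m + 2)) (i m)).map d * rprod (EMat d g i) m) := by
    rw [rprod_add _ (m + 1) q]
    congr 1
    · apply rprod_congr; intro t ht
      show (g (k (m + 1 + t + 1)) (k (m + 1 + t))).map d = EMat d g i (m + 2 + t)
      rw [hk2 (m + 1 + t + 1) (by omega), hk2 (m + 1 + t) (by omega),
        show m + 1 + t + 1 = m + 2 + t by omega]
      rfl
    · rw [rprod_succ]
      congr 1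
      · show (g (k (m + 1)) (k m)).map d = (g (i (m + 2)) (i m)).map d
        rw [hk2 (m + 1) le_rfl, hk1 m (by omega)]
      · apply rprod_congr; intro t ht
        show (g (k (t + 1)) (k t)).map d = EMat d g i t
        rw [hk1 (t + 1) (by omega), hk1 t (by omega)]
        rfl
  have eZm : rprod (fun t => if t = m then GMat g (i (t + 1)) (i t) else EMat d g i t)
        (m + 1 + q + 1)
      = (rprod (fun t => EMat d g i (m + 2 + t)) q * EMat d g i (m + 1)) *
          (GMat g (i (m + 1)) (i m) * rprod (EMat d g i) m) := by
    rw [show m + 1 + q + 1 = (m + 1) + (q + 1) by omega, rprod_add]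
    congr 1
    · rw [rprod_succ']
      congr 1
      · apply rprod_congr; intro t ht
        simp only [if_neg (show ¬ m + 1 + (1 + t) = m by omega)]
        rw [show m + 1 + (1 + t) = m + 2 + t by omega]
      · simp only [if_neg (show ¬ m + 1 + 0 = m by omega)]
    · rw [rprod_succ]
      congr 1
      · simp
      · apply rprod_congr; intro t ht
        simp only [if_neg (show ¬ t = m by omega)]
  have eZm1 : rprod (fun t => if t = m + 1 then GMat g (i (t + 1)) (i t) else EMat d g i t)
        (m + 1 + q + 1)
      = rprod (fun t => EMat d g i (m + 2 + t)) q *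
          (GMat g (i (m + 2)) (i (m + 1)) * (EMat d g i m * rprod (EMat d g i) m)) := by
    rw [show m + 1 + q + 1 = (m + 2) + q by omega, rprod_add]
    congr 1
    · apply rprod_congr; intro t ht
      simp only [if_neg (show ¬ m + 2 + t = m + 1 by omega)]
    · rw [rprod_succ]
      congr 1
      · simp
      · rw [rprod_succ]
        congr 1
        · simp only [if_neg (show ¬ m = m + 1 by omega)]
        · apply rprod_congr; intro t ht
          simp only [if_neg (show ¬ t = m + 1 by omega)]
  rw [chernCochain'_eq, ZTerm, ZTerm, eF, eZm, eZm1, hL,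
    hk1 0 (by omega), hk2 (m + 1 + q) (by omega), ← Matrix.trace_add]
  congr 1
  noncomm_ring

include hcoc hd_add hd_mul in
lemma chernCochain'_congr (k k' : ℕ → I) (p : ℕ) (h : ∀ t, t ≤ p → k t = k' t) :
    chernCochain' d g k p = chernCochain' d g k' p := by
  rw [chernCochain'_eq, chernCochain'_eq, h 0 (by omega), h p le_rfl]
  congr 2
  apply rprod_congr; intro t ht
  show (g (k (t + 1)) (k t)).map d = (g (k' (t + 1)) (k' t)).map d
  rw [h t (by omega), h (t + 1) (by omega)]
end cases
end

theorem chernCochain_cocycle' {Ω : Type*} [Ring Ω] (S : Subring Ω)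
    (hcen : ∀ (s : S) (x : Ω), (s : Ω) * x = x * (s : Ω))
    (d : S → Ω)
    (hd_add : ∀ a b : S, d (a + b) = d a + d b)
    (hd_mul : ∀ a b : S, d (a * b) = d a * (b : Ω) + (a : Ω) * d b)
    {n : ℕ} {I : Type*} (g : I → I → Matrix (Fin n) (Fin n) S)
    (hcoc : ∀ a b c : I, g a b * g b c = g a c)
    (hone : ∀ a : I, g a a = 1)
    (p : ℕ) (hp : 1 ≤ p) (i : ℕ → I) :
    ∑ j ∈ Finset.range (p + 2),
        (-1 : Ω) ^ j *
          chernCochain' d g (fun t => if t < j then i t else i (t + 1)) p = 0 := by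
  have hc : ∀ j, j < p + 2 →
      chernCochain' d g (fun t => if t < j then i t else i (t + 1)) p
        = (if j = 0 then 0 else ZTerm d g i p (j - 1))
            + (if j = p + 1 then 0 else ZTerm d g i p j) := by
    intro j hj
    rcases Nat.eq_zero_or_pos j with rfl | hjpos
    · rw [if_pos rfl, if_neg (show ¬ (0 : ℕ) = p + 1 by omega), zero_add]
      have hk : (fun t => if t < 0 then i t else i (t + 1)) = fun t => i (t + 1) := by
        funext t; simp
      rw [hk]
      exact case_first hcen d g hcoc p i
    · rcases eq_or_lt_of_le (show j ≤ p + 1 by omega) with rfl | hjlt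
      · rw [if_neg (by omega), if_pos rfl, add_zero]
        rw [chernCochain'_congr d hd_add hd_mul g hcoc
            (fun t => if t < p + 1 then i t else i (t + 1)) i p
            (fun t ht => by simp only [if_pos (show t < p + 1 by omega)])]
        rw [show p + 1 - 1 = p by omega]
        exact case_last d g hcoc p i
      · obtain ⟨m, rfl⟩ : ∃ m, j = m + 1 := ⟨j - 1, by omega⟩
        obtain ⟨q, rfl⟩ : ∃ q, p = m + 1 + q := ⟨p - (m + 1), by omega⟩
        rw [if_neg (by omega), if_neg (by omega)]
        rw [show m + 1 - 1 = m by omega]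
        exact case_mid d hd_add hd_mul g hcoc i m q _
          (fun t ht => by simp only [if_pos (show t < m + 1 by omega)])
          (fun t ht => by simp only [if_neg (show ¬ t < m + 1 by omega)])
  have hsum : ∑ j ∈ Finset.range (p + 2),
        (-1 : Ω) ^ j * chernCochain' d g (fun t => if t < j then i t else i (t + 1)) p
      = (∑ j ∈ Finset.range (p + 2),
          (-1 : Ω) ^ j * (if j = 0 then 0 else ZTerm d g i p (j - 1)))
        + ∑ j ∈ Finset.range (p + 2),
            (-1 : Ω) ^ j * (if j = p + 1 then 0 else ZTerm d g i p j) := by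
    rw [← Finset.sum_add_distrib]
    exact Finset.sum_congr rfl fun j hj => by
      rw [hc j (Finset.mem_range.mp hj), mul_add]
  rw [hsum]
  have h1 : ∑ j ∈ Finset.range (p + 2),
        (-1 : Ω) ^ j * (if j = 0 then 0 else ZTerm d g i p (j - 1))
      = ∑ j ∈ Finset.range (p + 1), (-1 : Ω) ^ (j + 1) * ZTerm d g i p j := by
    rw [Finset.sum_range_succ']
    simp
  have h2 : ∑ j ∈ Finset.range (p + 2),
        (-1 : Ω) ^ j * (if j = p + 1 then 0 else ZTerm d g i p j)
      = ∑ j ∈ Finset.range (p + 1), (-1 : Ω) ^ j * ZTerm d g i p j := by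
    rw [Finset.sum_range_succ]
    rw [if_pos rfl, mul_zero, add_zero]
    exact Finset.sum_congr rfl fun j hj => by
      rw [if_neg (show ¬ j = p + 1 by have := Finset.mem_range.mp hj; omega)]
  rw [h1, h2, ← Finset.sum_add_distrib]
  apply Finset.sum_eq_zero
  intro j hj
  rw [pow_succ, mul_neg_one, neg_mul, neg_add_cancel]

/-- The Chern character cochains form a Čech cocycle: for `p ≥ 1` and any indices
`i₀,…,i_{p+1}`, the alternating sum of the cochains on the index sequences with one
index omitted vanishes. -/
theorem chernCochain_cocycle {Ω : Type*} [Ring Ω] (S : Subring Ω)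
    (hcen : ∀ (s : S) (x : Ω), (s : Ω) * x = x * (s : Ω))
    (d : S → Ω)
    (hd_add : ∀ a b : S, d (a + b) = d a + d b)
    (hd_mul : ∀ a b : S, d (a * b) = d a * (b : Ω) + (a : Ω) * d b)
    {n : ℕ} {I : Type*} (g : I → I → Matrix (Fin n) (Fin n) S)
    (hcoc : ∀ a b c : I, g a b * g b c = g a c)
    (hone : ∀ a : I, g a a = 1)
    (p : ℕ) (hp : 1 ≤ p) (i : ℕ → I) :
    ∑ j ∈ Finset.range (p + 2),
        (-1 : Ω) ^ j *
          chernCochain S d g (fun t => if t < j then i t else i (t + 1)) p = 0 := by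
  have h : ∀ k : ℕ → I, chernCochain S d g k p = chernCochain' d g k p := fun _ => rfl
  simp only [h]
  exact chernCochain_cocycle' S hcen d hd_add hd_mul g hcoc hone p hp i
end

section
/- Let Ω be a ring, R a commutative subring contained in the center of Ω, and d : R → Ω additive with d(a·b) = d(a)·b + a·d(b). Let f, g, h be invertible n×n matrices over R, and D the entrywise application of d. Then trace((h·g)⁻¹·D(h)·D(g)) − trace((h·g·f)⁻¹·D(h)·D(g·f)) + trace((h·g·f)⁻¹·D(h·g)·D(f)) − trace((g·f)⁻¹·D(g)·D(f)) = 0, where all matrices are viewed over Ω. -/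
/-- The `p = 2` component of the Čech coboundary vanishing for the Chern character
cochains: for invertible matrices `f, g, h` over a central commutative subring `S`
of `Ω` and a Leibniz map `d : S → Ω` (applied entrywise as `D`),
`tr((hg)⁻¹ D(h) D(g)) − tr((hgf)⁻¹ D(h) D(gf)) + tr((hgf)⁻¹ D(hg) D(f)) − tr((gf)⁻¹ D(g) D(f)) = 0`. -/
theorem chern_two_cocycle {Ω : Type*} [Ring Ω] (S : Subring Ω)
    (hcen : ∀ (s : S) (x : Ω), (s : Ω) * x = x * (s : Ω))
    (d : S → Ω)
    (hd_add : ∀ a b : S, d (a + b) = d a + d b)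
    (hd_mul : ∀ a b : S, d (a * b) = d a * (b : Ω) + (a : Ω) * d b)
    {n : ℕ} (f g h finv ginv hinv : Matrix (Fin n) (Fin n) S)
    (hf : f * finv = 1) (hf' : finv * f = 1)
    (hg : g * ginv = 1) (hg' : ginv * g = 1)
    (hh : h * hinv = 1) (hh' : hinv * h = 1) :
    Matrix.trace (((ginv * hinv).map (fun x => (x : Ω))) * (h.map d) * (g.map d))
      - Matrix.trace (((finv * ginv * hinv).map (fun x => (x : Ω))) * (h.map d) * ((g * f).map d))
      + Matrix.trace (((finv * ginv * hinv).map (fun x => (x : Ω))) * ((h * g).map d) * (f.map d))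
      - Matrix.trace (((finv * ginv).map (fun x => (x : Ω))) * (g.map d) * (f.map d)) = 0 := by
  classical
  set ι : S →+* Ω := S.subtype with hι
  have hfun : (fun x : S => (x : Ω)) = ⇑ι := rfl
  -- entrywise map as a ring hom
  have Cmul : ∀ A B : Matrix (Fin n) (Fin n) S,
      (A * B).map ⇑ι = A.map ⇑ι * B.map ⇑ι := fun A B => Matrix.map_mul
  have Cone : (1 : Matrix (Fin n) (Fin n) S).map ⇑ι = 1 := by
    ext i j; by_cases hij : i = j <;> simp [Matrix.map_apply, Matrix.one_apply, hij]
  -- sums under d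
  have dsum : ∀ (s : Finset (Fin n)) (F : Fin n → S),
      d (∑ k ∈ s, F k) = ∑ k ∈ s, d (F k) :=
    fun s F => map_sum (AddMonoidHom.mk' d hd_add) F s
  -- Leibniz rule for matrices
  have leib : ∀ A B : Matrix (Fin n) (Fin n) S,
      (A * B).map d = A.map d * B.map ⇑ι + A.map ⇑ι * B.map d := by
    intro A B
    ext i j
    simp only [Matrix.map_apply, Matrix.mul_apply, Matrix.add_apply]
    rw [dsum]
    simp [hd_mul, Finset.sum_add_distrib]
    rfl
  -- trace commutation with central-entry matrices
  have trc : ∀ (A : Matrix (Fin n) (Fin n) Ω) (M : Matrix (Fin n) (Fin n) S),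
      Matrix.trace (A * M.map ⇑ι) = Matrix.trace (M.map ⇑ι * A) := by
    intro A M
    simp only [Matrix.trace, Matrix.diag, Matrix.mul_apply, Matrix.map_apply]
    rw [Finset.sum_comm]
    exact Finset.sum_congr rfl fun i _ => Finset.sum_congr rfl fun j _ =>
      (hcen (M i j) (A j i)).symm
  rw [hfun]
  simp only [Cmul, leib]
  -- abbreviations
  set F := f.map ⇑ι
  set G := g.map ⇑ι
  set H := h.map ⇑ι
  set F' := finv.map ⇑ι
  set G' := ginv.map ⇑ι
  set H' := hinv.map ⇑ι
  set Df := f.map d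
  set Dg := g.map d
  set Dh := h.map d
  have hFF' : F * F' = 1 := by rw [← Cmul, hf, Cone]
  have hF'F : F' * F = 1 := by rw [← Cmul, hf', Cone]
  have hGG' : G * G' = 1 := by rw [← Cmul, hg, Cone]
  have hG'G : G' * G = 1 := by rw [← Cmul, hg', Cone]
  have hHH' : H * H' = 1 := by rw [← Cmul, hh, Cone]
  have hH'H : H' * H = 1 := by rw [← Cmul, hh', Cone]
  have e2 : Matrix.trace (F' * G' * H' * Dh * (Dg * F + G * Df))
      = Matrix.trace (G' * H' * Dh * Dg) + Matrix.trace (F' * G' * H' * Dh * (G * Df)) := by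
    rw [mul_add, Matrix.trace_add]
    congr 1
    rw [show F' * G' * H' * Dh * (Dg * F) = (F' * (G' * H' * Dh * Dg)) * F by simp only [mul_assoc]]
    rw [trc _ f]
    have h0 : F * (F' * (G' * H' * Dh * Dg)) = G' * H' * Dh * Dg := by
      rw [← mul_assoc, hFF', one_mul]
    show (F * (F' * (G' * H' * Dh * Dg))).trace = _
    rw [h0]
  have e3 : Matrix.trace (F' * G' * H' * (Dh * G + H * Dg) * Df)
      = Matrix.trace (F' * G' * H' * Dh * (G * Df)) + Matrix.trace (F' * G' * Dg * Df) := by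
    have h1 : F' * G' * H' * (Dh * G) * Df = F' * G' * H' * Dh * (G * Df) := by
      simp only [mul_assoc]
    have h2 : F' * G' * H' * (H * Dg) * Df = F' * G' * Dg * Df := by
      rw [show F' * G' * H' * (H * Dg) * Df = F' * G' * (H' * H) * (Dg * Df) by
        simp only [mul_assoc], hH'H, mul_one]
      simp only [mul_assoc]
    rw [mul_add, add_mul, h1, h2, Matrix.trace_add]
  rw [e2, e3]
  abel
end

section
/- Let Ω be a ring, R a commutative subring of the center of Ω, and d : R → Ω additive with d(a·b) = d(a)·b + a·d(b). For invertible n×n matrices g₁, …, g_p over R define T(g₁,…,g_p) := trace( g₁·g₂·⋯·g_p · D(g_p⁻¹)·D(g_{p-1}⁻¹)·⋯·D(g₁⁻¹) ) ∈ Ω, where D applies d entrywise. Then for all p ≥ 1 and invertible matrices g₁, …, g_{p+1}: T(g₂,…,g_{p+1}) + Σ_{j=1}^{p} (−1)^j · T(g₁,…,g_j·g_{j+1},…,g_{p+1}) + (−1)^{p+1} · T(g₁,…,g_p) = 0. -/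
/-- The universal Chern form on `BG`:
`T(g₁,…,g_p) = tr( g₁⋯g_p · D(g_p⁻¹) ⋯ D(g₁⁻¹) )`, for invertible matrices over the
central commutative subring `S` of `Ω`, where `D` applies `d : S → Ω` entrywise and
matrices over `S` are viewed over `Ω` via coercion.  The argument is given as a list. -/
noncomputable def barT {Ω : Type*} [Ring Ω] (S : Subring Ω) (d : S → Ω) {n : ℕ}
    (L : List (Matrix (Fin n) (Fin n) S)ˣ) : Ω :=
  Matrix.trace
    (((L.map Units.val).prod.map (fun x => (x : Ω))) *
      ((L.reverse.map (fun u => (Units.val u⁻¹).map d)).prod))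

section Aux
variable {Ω : Type*} [Ring Ω] (S : Subring Ω) (d : S → Ω) {n : ℕ}

private def Cm' (M : Matrix (Fin n) (Fin n) S) : Matrix (Fin n) (Fin n) Ω :=
  M.map (fun x => (x : Ω))

private def Dm' (M : Matrix (Fin n) (Fin n) S) : Matrix (Fin n) (Fin n) Ω := M.map d

private def Pf (L : List (Matrix (Fin n) (Fin n) S)ˣ) : Matrix (Fin n) (Fin n) Ω :=
  Cm' S ((L.map Units.val).prod)

private def Qf (L : List (Matrix (Fin n) (Fin n) S)ˣ) : Matrix (Fin n) (Fin n) Ω :=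
  (L.reverse.map (fun v => Dm' S d (Units.val v⁻¹))).prod

private lemma barT_eq (L : List (Matrix (Fin n) (Fin n) S)ˣ) :
    barT S d L = Matrix.trace (Pf S L * Qf S d L) := rfl

private lemma Cm'_eq (M : Matrix (Fin n) (Fin n) S) : Cm' S M = S.subtype.mapMatrix M := rfl

private lemma Cm'_mul (M N : Matrix (Fin n) (Fin n) S) :
    Cm' S (M * N) = Cm' S M * Cm' S N := by
  rw [Cm'_eq, Cm'_eq, Cm'_eq, map_mul]

private lemma Cm'_one : Cm' S (1 : Matrix (Fin n) (Fin n) S) = 1 := by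
  rw [Cm'_eq, map_one]

private lemma Pf_nil : Pf S ([] : List (Matrix (Fin n) (Fin n) S)ˣ) = 1 := by
  simp only [Pf, List.map_nil, List.prod_nil, Cm'_one]

private lemma Pf_cons (g : (Matrix (Fin n) (Fin n) S)ˣ) (L : List (Matrix (Fin n) (Fin n) S)ˣ) :
    Pf S (g :: L) = Cm' S g.val * Pf S L := by
  simp only [Pf, List.map_cons, List.prod_cons, Cm'_mul]

private lemma Pf_append (L1 L2 : List (Matrix (Fin n) (Fin n) S)ˣ) :
    Pf S (L1 ++ L2) = Pf S L1 * Pf S L2 := by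
  simp only [Pf, List.map_append, List.prod_append, Cm'_mul]

private lemma Qf_nil : Qf S d ([] : List (Matrix (Fin n) (Fin n) S)ˣ) = 1 := rfl

private lemma Qf_cons (g : (Matrix (Fin n) (Fin n) S)ˣ) (L : List (Matrix (Fin n) (Fin n) S)ˣ) :
    Qf S d (g :: L) = Qf S d L * Dm' S d (Units.val g⁻¹) := by
  simp only [Qf, List.reverse_cons, List.map_append, List.prod_append, List.map_cons,
    List.map_nil, List.prod_cons, List.prod_nil, mul_one]

private lemma Qf_append (L1 L2 : List (Matrix (Fin n) (Fin n) S)ˣ) :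
    Qf S d (L1 ++ L2) = Qf S d L2 * Qf S d L1 := by
  simp only [Qf, List.reverse_append, List.map_append, List.prod_append]

private lemma Dm'_mul (hd_add : ∀ a b : S, d (a + b) = d a + d b)
    (hd_mul : ∀ a b : S, d (a * b) = d a * (b : Ω) + (a : Ω) * d b)
    (M N : Matrix (Fin n) (Fin n) S) :
    Dm' S d (M * N) = Dm' S d M * Cm' S N + Cm' S M * Dm' S d N := by
  have hd0 : d 0 = 0 := by
    have := hd_add 0 0
    simpa using this.symm
  have hdsum : ∀ (s : Finset (Fin n)) (f : Fin n → S), d (∑ j ∈ s, f j) = ∑ j ∈ s, d (f j) := by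
    intro s f
    induction s using Finset.induction_on with
    | empty => simpa using hd0
    | insert a s' hx ih => rw [Finset.sum_insert hx, Finset.sum_insert hx, hd_add, ih]
  ext i k
  simp only [Dm', Cm', Matrix.map_apply, Matrix.add_apply, Matrix.mul_apply, hdsum,
    Finset.sum_add_distrib.symm]
  exact Finset.sum_congr rfl fun j _ => hd_mul _ _

private lemma trace_Cm'_comm (hcen : ∀ (s : S) (x : Ω), (s : Ω) * x = x * (s : Ω))
    (X : Matrix (Fin n) (Fin n) Ω) (M : Matrix (Fin n) (Fin n) S) :
    Matrix.trace (X * Cm' S M) = Matrix.trace (Cm' S M * X) := by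
  simp only [Matrix.trace, Matrix.diag, Matrix.mul_apply, Cm', Matrix.map_apply]
  rw [Finset.sum_comm]
  exact Finset.sum_congr rfl fun i _ => Finset.sum_congr rfl fun j _ => (hcen _ _).symm

/-- The telescoping intermediate quantity. -/
private noncomputable def XX (L1 : List (Matrix (Fin n) (Fin n) S)ˣ)
    (g : (Matrix (Fin n) (Fin n) S)ˣ) (L2 : List (Matrix (Fin n) (Fin n) S)ˣ) : Ω :=
  Matrix.trace (Pf S (L1 ++ g :: L2) * Qf S d L2 * Cm' S (Units.val g⁻¹) * Qf S d L1)

private lemma unit_inv_mul (g : (Matrix (Fin n) (Fin n) S)ˣ) :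
    Cm' S (Units.val g⁻¹) * Cm' S g.val = 1 := by
  rw [← Cm'_mul, g.inv_mul, Cm'_one]

private lemma unit_mul_inv (g : (Matrix (Fin n) (Fin n) S)ˣ) :
    Cm' S g.val * Cm' S (Units.val g⁻¹) = 1 := by
  rw [← Cm'_mul, g.mul_inv, Cm'_one]

private lemma K1 (hd_add : ∀ a b : S, d (a + b) = d a + d b)
    (hd_mul : ∀ a b : S, d (a * b) = d a * (b : Ω) + (a : Ω) * d b)
    (L1 L2 : List (Matrix (Fin n) (Fin n) S)ˣ) (g h : (Matrix (Fin n) (Fin n) S)ˣ) :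
    barT S d (L1 ++ (g * h) :: L2) =
      XX S d L1 g (h :: L2) + XX S d (L1 ++ [g]) h L2 := by
  have hP : Pf S (L1 ++ (g * h) :: L2) = Pf S (L1 ++ g :: h :: L2) := by
    simp only [Pf_append, Pf_cons, Units.val_mul, Cm'_mul, mul_assoc]
  have hD : Dm' S d (Units.val (g * h)⁻¹) =
      Dm' S d (Units.val h⁻¹) * Cm' S (Units.val g⁻¹) +
        Cm' S (Units.val h⁻¹) * Dm' S d (Units.val g⁻¹) := by
    rw [mul_inv_rev, Units.val_mul, Dm'_mul S d hd_add hd_mul]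
  rw [barT_eq, Qf_append, Qf_cons, hD, hP]
  rw [XX, XX, Qf_cons]
  have hP2 : Pf S ((L1 ++ [g]) ++ h :: L2) = Pf S (L1 ++ g :: h :: L2) := by
    simp only [List.append_assoc, List.cons_append, List.nil_append]
  have hQ2 : Qf S d (L1 ++ [g]) = Dm' S d (Units.val g⁻¹) * Qf S d L1 := by
    rw [Qf_append, Qf_cons, Qf_nil, one_mul]
  rw [hP2, hQ2]
  simp only [mul_add, add_mul, Matrix.trace_add, mul_assoc]

private lemma K2 (hcen : ∀ (s : S) (x : Ω), (s : Ω) * x = x * (s : Ω))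
    (g : (Matrix (Fin n) (Fin n) S)ˣ) (L2 : List (Matrix (Fin n) (Fin n) S)ˣ) :
    XX S d [] g L2 = barT S d L2 := by
  rw [XX, Qf_nil, mul_one, List.nil_append, trace_Cm'_comm S hcen, barT_eq]
  rw [← mul_assoc, Pf_cons, ← mul_assoc, unit_inv_mul, one_mul]

private lemma K3 (L1 : List (Matrix (Fin n) (Fin n) S)ˣ) (g : (Matrix (Fin n) (Fin n) S)ˣ) :
    XX S d L1 g [] = barT S d L1 := by
  rw [XX, Qf_nil, mul_one, barT_eq, Pf_append, Pf_cons, Pf_nil, mul_one]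
  rw [mul_assoc (Pf S L1), unit_mul_inv, mul_one]

end Aux

section Main
variable {Ω : Type*} [Ring Ω] (S : Subring Ω) (d : S → Ω) {n : ℕ}

/-- `Xf m` is the telescoping term `X_{m+1}` in the bar-cocycle proof. -/
private noncomputable def Xf (u : ℕ → (Matrix (Fin n) (Fin n) S)ˣ) (p m : ℕ) : Ω :=
  XX S d ((List.range m).map fun t => u (t + 1)) (u (m + 1))
    ((List.range (p - m)).map fun t => u (t + m + 2))

end Main

set_option maxHeartbeats 2000000 in
/-- The universal Chern forms are closed under the simplicial (bar) differential of
`BG`: for `p ≥ 1` and invertible matrices `g₁,…,g_{p+1}` (given as `u 1, …, u (p+1)`),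
`T(g₂,…,g_{p+1}) + Σ_{j=1}^{p} (−1)^j T(g₁,…,g_j·g_{j+1},…,g_{p+1}) + (−1)^{p+1} T(g₁,…,g_p) = 0`. -/
theorem barT_cocycle {Ω : Type*} [Ring Ω] (S : Subring Ω)
    (hcen : ∀ (s : S) (x : Ω), (s : Ω) * x = x * (s : Ω))
    (d : S → Ω)
    (hd_add : ∀ a b : S, d (a + b) = d a + d b)
    (hd_mul : ∀ a b : S, d (a * b) = d a * (b : Ω) + (a : Ω) * d b)
    {n : ℕ} (p : ℕ) (hp : 1 ≤ p) (u : ℕ → (Matrix (Fin n) (Fin n) S)ˣ) :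
    ∑ j ∈ Finset.range (p + 2),
        (-1 : Ω) ^ j *
          barT S d ((List.range p).map (fun t =>
            if t + 1 < j then u (t + 1)
            else if t + 1 = j then u j * u (j + 1)
            else u (t + 2))) = 0 := by
  -- the j = 0 term
  have hT0 : barT S d ((List.range p).map (fun t =>
      if t + 1 < 0 then u (t + 1)
      else if t + 1 = 0 then u 0 * u (0 + 1)
      else u (t + 2))) = Xf S d u p 0 := by
    have hl : ((List.range p).map (fun t =>
        if t + 1 < 0 then u (t + 1)
        else if t + 1 = 0 then u 0 * u (0 + 1)
        else u (t + 2))) = (List.range p).map fun t => u (t + 2) := by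
      apply List.map_congr_left
      intro t _
      simp
    rw [hl, Xf]
    simp only [List.range_zero, List.map_nil, Nat.sub_zero, Nat.add_zero]
    rw [K2 S d hcen]
  -- the j = p + 1 term
  have hTp : barT S d ((List.range p).map (fun t =>
      if t + 1 < p + 1 then u (t + 1)
      else if t + 1 = p + 1 then u (p + 1) * u (p + 1 + 1)
      else u (t + 2))) = Xf S d u p p := by
    have hl : ((List.range p).map (fun t =>
        if t + 1 < p + 1 then u (t + 1)
        else if t + 1 = p + 1 then u (p + 1) * u (p + 1 + 1)
        else u (t + 2))) = (List.range p).map fun t => u (t + 1) := by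
      apply List.map_congr_left
      intro t ht
      rw [List.mem_range] at ht
      rw [if_pos (by omega)]
    rw [hl, Xf]
    simp only [Nat.sub_self, List.range_zero, List.map_nil]
    rw [K3]
  -- the middle terms
  have hmid : ∀ m, m < p → barT S d ((List.range p).map (fun t =>
      if t + 1 < m + 1 then u (t + 1)
      else if t + 1 = m + 1 then u (m + 1) * u (m + 1 + 1)
      else u (t + 2))) = Xf S d u p m + Xf S d u p (m + 1) := by
    intro m hm
    have hsplit : ((List.range p).map (fun t =>
        if t + 1 < m + 1 then u (t + 1)
        else if t + 1 = m + 1 then u (m + 1) * u (m + 1 + 1)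
        else u (t + 2))) =
        ((List.range m).map fun t => u (t + 1)) ++
          (u (m + 1) * u (m + 1 + 1)) ::
            ((List.range (p - (m + 1))).map fun t => u (t + (m + 1) + 2)) := by
      conv_lhs => rw [show p = (m + 1) + (p - (m + 1)) from by omega]
      rw [List.range_add, List.range_succ, List.map_append, List.map_append, List.map_map,
        List.map_singleton, List.append_assoc, List.singleton_append]
      congr 1
      · apply List.map_congr_left
        intro t ht
        rw [List.mem_range] at ht
        rw [if_pos (by omega)]
      · congr 1
        · rw [if_neg (by omega), if_pos rfl]
        · apply List.map_congr_left
          intro t _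
          simp only [Function.comp_apply]
          rw [if_neg (by omega), if_neg (by omega)]
          congr 1
          omega
    rw [hsplit, K1 S d hd_add hd_mul]
    congr 1
    · rw [Xf]
      congr 1
      have : p - m = (p - (m + 1)) + 1 := by omega
      rw [this, List.range_succ_eq_map, List.map_cons, List.map_map]
      congr 1
      · congr 1
        omega
      · apply List.map_congr_left
        intro t _
        simp only [Function.comp_apply]
        congr 1
        omega
    · rw [Xf]
      congr 2
      rw [List.range_succ, List.map_append, List.map_singleton]
  -- now telescope
  rw [Finset.sum_range_succ, Finset.sum_range_succ']
  have hcongr : ∀ i ∈ Finset.range p,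
      (-1 : Ω) ^ (i + 1) * barT S d ((List.range p).map (fun t =>
          if t + 1 < i + 1 then u (t + 1)
          else if t + 1 = i + 1 then u (i + 1) * u (i + 1 + 1)
          else u (t + 2))) =
        (-1 : Ω) ^ (i + 1) * Xf S d u p i - (-1 : Ω) ^ (i + 1 + 1) * Xf S d u p (i + 1) := by
    intro i hi
    rw [Finset.mem_range] at hi
    rw [hmid i hi, mul_add, pow_succ (-1 : Ω) (i + 1), mul_neg_one, neg_mul, sub_neg_eq_add]
  rw [Finset.sum_congr rfl hcongr,
    Finset.sum_range_sub' (fun m => (-1 : Ω) ^ (m + 1) * Xf S d u p m), hT0, hTp]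
  simp only [pow_zero, one_mul, zero_add, pow_one, neg_one_mul]
  abel
end

section
/- Let X be a set, I a type, and U : I → Set X a cover of X (⋃_i U i = X). Let Č(U) be the Čech nerve simplicial set, whose q-simplices are pairs (i, x) with i : Fin(q+1) → I and x ∈ ⋂_t U(i t), with faces/degeneracies deleting/repeating indices. Let G be a group and BG the classifying simplicial set with BG_q = G^q, faces d_j multiplying adjacent entries (d₀ and d_q dropping the first/last entry) and degeneracies inserting the unit. Then simplicial set maps Č(U) → BG are in natural bijection with families of functions g_{i,j} : U i ∩ U j → G (for i, j ∈ I) satisfying g_{i,j}(x) · g_{j,k}(x) = g_{i,k}(x) for all x ∈ U i ∩ U j ∩ U k, and g_{i,i}(x) = 1 for all x ∈ U i. -/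
open CategoryTheory

/-- The Čech nerve of a cover `U : I → Set X`: its `q`-simplices are pairs of an index
tuple `i : Fin (q+1) → I` together with a point `x` lying in all the `U (i t)`;
simplicial structure maps act by reindexing. -/
def cechNerveSSet {X I : Type} (U : I → Set X) : SSet where
  obj Δ := { p : (Fin (Δ.unop.len + 1) → I) × X // ∀ t, p.2 ∈ U (p.1 t) }
  map f := TypeCat.ofHom fun p => ⟨(p.1.1 ∘ f.unop.toOrderHom, p.1.2), fun t => p.2 (f.unop.toOrderHom t)⟩

namespace CechBGAux

open Simplicial

lemma nerve_whisker_map {C : Type} [Category C] {Δ₁ Δ₂ : SimplexCategory}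
    (Y : (nerve C).obj (Opposite.op Δ₂)) (f : Δ₁ ⟶ Δ₂)
    (a b : Fin (Δ₁.len + 1)) (h : a ≤ b) :
    ((nerve C).map f.op Y).map (homOfLE h) =
      Y.map (homOfLE (f.toOrderHom.monotone h)) :=
  congrArg Y.map (Subsingleton.elim _ _)

variable {X I G : Type} [Group G] {U : I → Set X}

/-- The 1-simplex of the Čech nerve given by indices `i, j` and a point. -/
def oneSx (U : I → Set X) (i j : I) (x : X) (hi : x ∈ U i) (hj : x ∈ U j) :
    (cechNerveSSet U).obj (Opposite.op (SimplexCategory.mk 1)) :=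
  ⟨(![i, j], x), by intro t; fin_cases t; exacts [hi, hj]⟩

/-- The Čech cocycle extracted from a simplicial map to `BG`. -/
def gOf (F : cechNerveSSet U ⟶ nerve (SingleObj G)) (i j : I) (x : ↥(U i ∩ U j)) : G :=
  (((F.app (Opposite.op (SimplexCategory.mk 1))
      (oneSx U i j x.1 x.2.1 x.2.2)).map' 0 1 : G))⁻¹

/-- The map `[1] ⟶ Δ` picking out the vertices `a ≤ b`. -/
def pairHom {Δ : SimplexCategory} (a b : Fin (Δ.len + 1)) (h : a ≤ b) :
    SimplexCategory.mk 1 ⟶ Δ :=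
  SimplexCategory.Hom.mk ⟨![a, b], by
    intro s t hst
    fin_cases s <;> fin_cases t <;> simp_all <;> omega⟩

lemma F_map' (F : cechNerveSSet U ⟶ nerve (SingleObj G)) {Δ : SimplexCategoryᵒᵖ}
    (p : (cechNerveSSet U).obj Δ) (a b : Fin (Δ.unop.len + 1)) (h : a ≤ b) :
    ((F.app Δ p).map (homOfLE h) : G) =
      (gOf F (p.1.1 a) (p.1.1 b) ⟨p.1.2, ⟨p.2 a, p.2 b⟩⟩)⁻¹ := by
  have hs : (cechNerveSSet U).map (pairHom a b h).op p =
      oneSx U (p.1.1 a) (p.1.1 b) p.1.2 (p.2 a) (p.2 b) := by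
    apply Subtype.ext
    refine Prod.ext ?_ rfl
    funext t
    fin_cases t <;> rfl
  have hnat : F.app (Opposite.op (SimplexCategory.mk 1))
      ((cechNerveSSet U).map (pairHom a b h).op p) =
      (nerve (SingleObj G)).map (pairHom a b h).op (F.app Δ p) :=
    FunctorToTypes.naturality F (pairHom a b h).op p
  have h01 : (F.app (Opposite.op (SimplexCategory.mk 1))
      ((cechNerveSSet U).map (pairHom a b h).op p)).map' 0 1 =
      ((nerve (SingleObj G)).map (pairHom a b h).op (F.app Δ p)).map' 0 1 := by
    rw [hnat]
  rw [hs] at h01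
  have hw := nerve_whisker_map (F.app Δ p) (pairHom a b h)
    ⟨0, by decide⟩ ⟨1, by decide⟩ (by decide)
  have hkey : (gOf F (p.1.1 a) (p.1.1 b) ⟨p.1.2, ⟨p.2 a, p.2 b⟩⟩ : G)⁻¹ =
      ((F.app Δ p).map (homOfLE ((pairHom a b h).toOrderHom.monotone
        (show (⟨0, by decide⟩ : Fin 2) ≤ ⟨1, by decide⟩ by decide))) : G) := by
    show (((F.app (Opposite.op (SimplexCategory.mk 1))
      (oneSx U (p.1.1 a) (p.1.1 b) p.1.2 (p.2 a) (p.2 b))).map' 0 1 : G))⁻¹⁻¹ = _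
    rw [inv_inv, h01]
    exact hw
  rw [hkey]
  rfl

/-- The functor `Fin (q+1) ⥤ SingleObj G` attached to a `q`-simplex of the Čech
nerve by a cocycle `g`. -/
noncomputable def appOf (g : ∀ i j : I, ↥(U i ∩ U j) → G) {Δ : SimplexCategoryᵒᵖ}
    (p : (cechNerveSSet U).obj Δ) : ComposableArrows (SingleObj G) Δ.unop.len :=
  ComposableArrows.mkOfObjOfMapSucc (fun _ => SingleObj.star G)
    (fun t => ((g (p.1.1 t.castSucc) (p.1.1 t.succ)
      ⟨p.1.2, ⟨p.2 t.castSucc, p.2 t.succ⟩⟩)⁻¹ :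
        SingleObj.star G ⟶ SingleObj.star G))

lemma appOf_map (g : ∀ i j : I, ↥(U i ∩ U j) → G)
    (hmul : ∀ (i j k : I) (x : X) (hi : x ∈ U i) (hj : x ∈ U j) (hk : x ∈ U k),
      g i j ⟨x, ⟨hi, hj⟩⟩ * g j k ⟨x, ⟨hj, hk⟩⟩ = g i k ⟨x, ⟨hi, hk⟩⟩)
    (hone : ∀ (i : I) (x : X) (hi : x ∈ U i), g i i ⟨x, ⟨hi, hi⟩⟩ = 1)
    {Δ : SimplexCategoryᵒᵖ} (p : (cechNerveSSet U).obj Δ)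
    (a b : Fin (Δ.unop.len + 1)) (h : a ≤ b) :
    ((appOf g p).map (homOfLE h) : G) =
      (g (p.1.1 a) (p.1.1 b) ⟨p.1.2, ⟨p.2 a, p.2 b⟩⟩)⁻¹ := by
  suffices H : ∀ (b' a' : ℕ) (hab : a' ≤ b') (hb : b' ≤ Δ.unop.len),
      ((appOf g p).map' a' b' hab hb : G) =
        (g (p.1.1 ⟨a', by omega⟩) (p.1.1 ⟨b', by omega⟩)
          ⟨p.1.2, ⟨p.2 _, p.2 _⟩⟩)⁻¹ by
    have hble : b.1 ≤ Δ.unop.len := Nat.lt_succ_iff.mp b.isLt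
    have := H b.1 a.1 h hble
    refine Eq.trans ?_ this
    exact congrArg (appOf g p).map (Subsingleton.elim _ _)
  intro b'
  induction b' with
  | zero =>
    intro a' hab hb
    obtain rfl : a' = 0 := Nat.le_zero.mp hab
    refine Eq.trans (ComposableArrows.map'_self (appOf g p) 0 hb : _) ?_
    rw [hone _ _ (p.2 _), inv_one]
    rfl
  | succ b' ih =>
    intro a' hab hb
    rcases Nat.lt_or_ge a' (b' + 1) with hlt | hge
    · have hab' : a' ≤ b' := by omega
      have hble : b' ≤ Δ.unop.len := by omega
      rw [ComposableArrows.map'_comp (appOf g p) a' b' (b' + 1) hab' (by omega) hb]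
      rw [SingleObj.comp_as_mul]
      have hsucc : ((appOf g p).map' b' (b' + 1) (by omega) hb : G) =
          (g (p.1.1 ⟨b', by omega⟩) (p.1.1 ⟨b' + 1, by omega⟩)
            ⟨p.1.2, ⟨p.2 _, p.2 _⟩⟩)⁻¹ := by
        have hlt' : b' < Δ.unop.len := by omega
        have := ComposableArrows.mkOfObjOfMapSucc_map_succ
          (fun _ => SingleObj.star G)
          (fun t => ((g (p.1.1 t.castSucc) (p.1.1 t.succ)
            ⟨p.1.2, ⟨p.2 t.castSucc, p.2 t.succ⟩⟩)⁻¹ :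
              SingleObj.star G ⟶ SingleObj.star G)) b' hlt'
        exact this
      rw [hsucc, ih a' hab' hble]
      rw [← mul_inv_rev]
      rw [hmul _ _ _ p.1.2 (p.2 _) (p.2 _) (p.2 _)]
    · obtain rfl : a' = b' + 1 := by omega
      refine Eq.trans (ComposableArrows.map'_self (appOf g p) (b' + 1) hb : _) ?_
      rw [hone _ _ (p.2 _), inv_one]
      rfl

lemma gOf_mul (F : cechNerveSSet U ⟶ nerve (SingleObj G)) (i j k : I) (x : X)
    (hi : x ∈ U i) (hj : x ∈ U j) (hk : x ∈ U k) :
    gOf F i j ⟨x, ⟨hi, hj⟩⟩ * gOf F j k ⟨x, ⟨hj, hk⟩⟩ = gOf F i k ⟨x, ⟨hi, hk⟩⟩ := by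
  set s : (cechNerveSSet U).obj (Opposite.op (SimplexCategory.mk 2)) :=
    ⟨(![i, j, k], x), by intro t; fin_cases t; exacts [hi, hj, hk]⟩ with hsdef
  have h01 := F_map' F s ⟨0, by decide⟩ ⟨1, by decide⟩ (by decide)
  have h12 := F_map' F s ⟨1, by decide⟩ ⟨2, by decide⟩ (by decide)
  have h02 := F_map' F s ⟨0, by decide⟩ ⟨2, by decide⟩ (by decide)
  have hcomp : (F.app (Opposite.op (SimplexCategory.mk 2)) s).map
      (homOfLE (show (⟨0, by decide⟩ : Fin 3) ≤ ⟨2, by decide⟩ by decide)) =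
      (F.app _ s).map (homOfLE (show (⟨0, by decide⟩ : Fin 3) ≤ ⟨1, by decide⟩ by decide)) ≫
      (F.app _ s).map (homOfLE (show (⟨1, by decide⟩ : Fin 3) ≤ ⟨2, by decide⟩ by decide)) := by
    refine Eq.trans ?_ ((F.app _ s).map_comp _ _)
    exact congrArg (F.app _ s).map (Subsingleton.elim _ _)
  rw [h01, h12, h02] at hcomp
  rw [SingleObj.comp_as_mul, ← mul_inv_rev] at hcomp
  have := inv_injective hcomp
  exact this.symm

lemma gOf_one (F : cechNerveSSet U ⟶ nerve (SingleObj G)) (i : I) (x : X)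
    (hi : x ∈ U i) : gOf F i i ⟨x, ⟨hi, hi⟩⟩ = 1 := by
  set s : (cechNerveSSet U).obj (Opposite.op (SimplexCategory.mk 0)) :=
    ⟨(![i], x), by intro t; fin_cases t; exact hi⟩ with hsdef
  have h00 := F_map' F s ⟨0, by decide⟩ ⟨0, by decide⟩ le_rfl
  have hid : (F.app (Opposite.op (SimplexCategory.mk 0)) s).map
      (homOfLE (le_refl (⟨0, by decide⟩ : Fin 1))) = 𝟙 _ := by
    have heq : homOfLE (le_refl (⟨0, by decide⟩ : Fin 1)) = 𝟙 _ :=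
      Subsingleton.elim _ _
    rw [heq]
    exact (F.app (Opposite.op (SimplexCategory.mk 0)) s).map_id _
  rw [hid] at h00
  have : (1 : G) = (gOf F i i ⟨x, ⟨hi, hi⟩⟩)⁻¹ := h00
  rw [eq_comm, inv_eq_one] at this
  exact this

/-- The simplicial map to `BG` attached to a Čech cocycle. -/
noncomputable def funOf (g : ∀ i j : I, ↥(U i ∩ U j) → G)
    (hmul : ∀ (i j k : I) (x : X) (hi : x ∈ U i) (hj : x ∈ U j) (hk : x ∈ U k),
      g i j ⟨x, ⟨hi, hj⟩⟩ * g j k ⟨x, ⟨hj, hk⟩⟩ = g i k ⟨x, ⟨hi, hk⟩⟩)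
    (hone : ∀ (i : I) (x : X) (hi : x ∈ U i), g i i ⟨x, ⟨hi, hi⟩⟩ = 1) :
    cechNerveSSet U ⟶ nerve (SingleObj G) where
  app Δ := TypeCat.ofHom fun p => appOf g p
  naturality Δ Δ' f := by
    ext p
    show appOf g ((cechNerveSSet U).map f p) = (nerve (SingleObj G)).map f (appOf g p)
    refine ComposableArrows.ext (fun i => rfl) (fun t ht => ?_)
    simp only [eqToHom_refl, Category.comp_id, Category.id_comp]
    have hle : (⟨t, by omega⟩ : Fin (Δ'.unop.len + 1)) ≤ ⟨t + 1, by omega⟩ := by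
      simp [Fin.le_def]
    have hL := appOf_map g hmul hone ((cechNerveSSet U).map f p)
      ⟨t, by omega⟩ ⟨t + 1, by omega⟩ hle
    have hw := nerve_whisker_map (appOf g p) f.unop ⟨t, by omega⟩ ⟨t + 1, by omega⟩ hle
    have hR := appOf_map g hmul hone p
      (f.unop.toOrderHom ⟨t, by omega⟩) (f.unop.toOrderHom ⟨t + 1, by omega⟩)
      (f.unop.toOrderHom.monotone hle)
    exact hL.trans ((hw.trans hR)).symm

end CechBGAux

open CechBGAux in
/-- Lemma 4.14 of the paper (case `n = 0`): simplicial set maps from the Čech nerve of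
a cover `U` of `X` to `BG` (the nerve of the one-object groupoid on the group `G`) are
in bijection with families `gₘ : U i ∩ U j → G` satisfying the cocycle condition
`g_{ij}(x)·g_{jk}(x) = g_{ik}(x)` and `g_{ii}(x) = 1`. -/
theorem cechNerve_maps_to_BG {X I G : Type} [Group G] (U : I → Set X)
    (hcover : (⋃ i, U i) = Set.univ) :
    Nonempty ((cechNerveSSet U ⟶ nerve (SingleObj G)) ≃
      { g : ∀ i j : I, ↥(U i ∩ U j) → G //
        (∀ (i j k : I) (x : X) (hi : x ∈ U i) (hj : x ∈ U j) (hk : x ∈ U k),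
          g i j ⟨x, ⟨hi, hj⟩⟩ * g j k ⟨x, ⟨hj, hk⟩⟩ = g i k ⟨x, ⟨hi, hk⟩⟩) ∧
        (∀ (i : I) (x : X) (hi : x ∈ U i), g i i ⟨x, ⟨hi, hi⟩⟩ = 1) }) := by
  classical
  refine ⟨{
    toFun := fun F => ⟨gOf F, fun i j k x hi hj hk => gOf_mul F i j k x hi hj hk,
      fun i x hi => gOf_one F i x hi⟩
    invFun := fun g => funOf g.1 g.2.1 g.2.2
    left_inv := ?_
    right_inv := ?_ }⟩
  · -- left inverse
    intro F
    apply NatTrans.ext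
    funext Δ
    ext p
    refine ComposableArrows.ext (fun i => rfl) (fun t ht => ?_)
    simp only [eqToHom_refl, Category.comp_id, Category.id_comp]
    have hle : (⟨t, by omega⟩ : Fin (Δ.unop.len + 1)) ≤ ⟨t + 1, by omega⟩ := by
      simp [Fin.le_def]
    have hL := appOf_map (gOf F) (fun i j k x hi hj hk => gOf_mul F i j k x hi hj hk)
      (fun i x hi => gOf_one F i x hi) p ⟨t, by omega⟩ ⟨t + 1, by omega⟩ hle
    have hR := F_map' F p ⟨t, by omega⟩ ⟨t + 1, by omega⟩ hle
    exact hL.trans hR.symm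
  · -- right inverse
    intro g
    apply Subtype.ext
    funext i j x
    show gOf (funOf g.1 g.2.1 g.2.2) i j x = g.1 i j x
    have hmm := appOf_map g.1 g.2.1 g.2.2 (oneSx U i j x.1 x.2.1 x.2.2)
      ⟨0, by decide⟩ ⟨1, by decide⟩ (by decide)
    exact (congrArg Inv.inv hmm).trans (inv_inv _)
end
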